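/- arXiv:1303.0730 — 3 statements merged into one kernel-verified Lean document; each statement's English description precedes it below -/
import Mathlib

section
/- In the semantics of linear temporal logic over ℕ, there is no predicate P : ℕ → Prop such that for all n, P(n) ↔ (∀ k > n, ¬P(k)). -/
theorem no_yablo_predicate :
    ¬ ∃ P : ℕ → Prop, ∀ n : ℕ, P n ↔ ∀ k : ℕ, k > n → ¬ P k := by
  rintro ⟨P, h⟩
  have hnone : ∀ n, ¬ P n := by
    intro n hn
    have hall := (h n).mp hn
    exact hall (n+1) (by omega)
      ((h (n+1)).mpr fun k hk => hall k (by omega))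
  exact hnone 0 ((h 0).mpr fun k _ => hnone k)
end

section
/- There is no predicate P : ℕ → Prop satisfying P(n) ↔ (∀ m ≥ n+1, ¬P(m)) for all n; equivalently, the operator taking a time-indexed proposition P to the proposition 'P is false at all future times' has no fixed point. -/
theorem no_ltl_yablo_fixed_point :
    ¬ ∃ P : ℕ → Prop, ∀ n : ℕ, P n ↔ ∀ m : ℕ, m ≥ n + 1 → ¬ P m := by
  rintro ⟨P, h⟩
  have none : ∀ n, ¬ P n := by
    intro n hn
    have hall := (h n).mp hn
    exact hall (n+1) le_rfl ((h (n+1)).mpr (fun m hm => hall m (le_trans (Nat.le_succ _) hm)))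
  exact none 0 ((h 0).mpr (fun m _ => none m))
end

section
/- If every function g : B → D is representable by some f : B × B → D (i.e., the map b ↦ f(·, b) is surjective onto D^B), then every function α : D → D has a fixed point, provided B is nonempty. -/
theorem lawvere_fixed_point {B D : Type*} [Nonempty B] (f : B × B → D)
    (hsurj : ∀ g : B → D, ∃ b : B, ∀ x : B, g x = f (x, b)) :
    ∀ α : D → D, ∃ d : D, α d = d := by
  intro α
  obtain ⟨b, hb⟩ := hsurj (fun x => α (f (x, x)))
  exact ⟨f (b, b), hb b⟩
end
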